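/- Let 0 < r ≤ 1, 1 ≤ p ≤ 2, 1/r = 1/2 + 1/p, and let p' be the conjugate exponent of p. Every complex Banach space X has the approximation property AP_{[r,p']} in the following sense: whenever (λ_k) is a scalar sequence with Σ_k |λ_k|^r < ∞, (x'_k) is a bounded sequence in X*, (x_k) is a weakly p'-summable sequence in X, and Σ_k λ_k x'_k(x) x_k = 0 for every x ∈ X, then Σ_k λ_k ⟨U x_k, x'_k⟩ = 0 for every bounded linear operator U : X → X**. -/

import Mathlib

open Filter
open scoped ENNReal Topology

/-- `(x_k)` is weakly `q`-summable (`q = ⊤` meaning bounded; `q < ∞` meaning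
`sup_{‖f‖≤1} ∑_k |f(x_k)|^q < ∞`). -/
def WeaklyQSummable (q : ℝ≥0∞) {X : Type*} [NormedAddCommGroup X]
    [NormedSpace ℂ X] (x : ℕ → X) : Prop :=
  (q = ⊤ → ∃ M, ∀ k, ‖x k‖ ≤ M) ∧
  (q ≠ ⊤ → ∃ C, ∀ f : X →L[ℂ] ℂ, ‖f‖ ≤ 1 →
    ∀ F : Finset ℕ, ∑ k ∈ F, ‖f (x k)‖ ^ q.toReal ≤ C)

noncomputable section APaux

namespace APaux

abbrev H : Type := lp (fun _ : ℕ => ℂ) 2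

lemma two_toReal : ((2:ℝ≥0∞)).toReal = 2 := by norm_num

/-- standard basis -/
def e (k : ℕ) : H := lp.single 2 k 1

lemma e_apply (k j : ℕ) : (e k : ℕ → ℂ) j = if j = k then 1 else 0 := by
  rw [e, lp.single_apply]
  split_ifs with h
  · subst h; exact Pi.single_eq_same _ _
  · exact Pi.single_eq_of_ne h _

lemma e_apply_self (k : ℕ) : (e k : ℕ → ℂ) k = 1 := by simp [e_apply]

/-- coordinate functional -/
def π (k : ℕ) : H →L[ℂ] ℂ :=
  LinearMap.mkContinuous
    { toFun := fun f => (f : ℕ → ℂ) k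
      map_add' := fun f g => by simp [lp.coeFn_add]
      map_smul' := fun c f => by simp [lp.coeFn_smul] }
    1 (fun f => by
      rw [one_mul]; exact lp.norm_apply_le_norm (by norm_num : (2:ℝ≥0∞) ≠ 0) f k)

@[simp] lemma π_apply (k : ℕ) (f : H) : π k f = (f : ℕ → ℂ) k := rfl

lemma hasSum_normSq (v : H) :
    HasSum (fun i => ‖(v : ℕ → ℂ) i‖ ^ 2) (‖v‖ ^ 2) := by
  have h := lp.hasSum_norm (by norm_num [two_toReal] : 0 < ((2:ℝ≥0∞)).toReal) v
  rw [two_toReal] at h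
  have h2 : ∀ x : ℝ, x ^ (2:ℝ) = x ^ 2 := fun x => by
    rw [show (2:ℝ) = ((2:ℕ):ℝ) by norm_num, Real.rpow_natCast]
  simpa [h2] using h

lemma single_eq_smul (j : ℕ) (c : ℂ) : lp.single 2 j c = c • e j := by
  rw [e, ← lp.single_smul]
  norm_num

lemma hasSum_single' (w : H) : HasSum (fun j => (w : ℕ → ℂ) j • e j) w := by
  have h := lp.hasSum_single (by norm_num : (2:ℝ≥0∞) ≠ ⊤) w
  refine h.congr_fun fun j => ?_
  rw [single_eq_smul]

/-- Parseval for functionals on ℓ² -/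
lemma parseval (ρ : H →L[ℂ] ℂ) :
    HasSum (fun i => ‖ρ (e i)‖ ^ 2) (‖ρ‖ ^ 2) := by
  set v : H := (InnerProductSpace.toDual ℂ H).symm ρ with hv
  have hρ : ∀ y : H, ρ y = inner ℂ v y := fun y =>
    (InnerProductSpace.toDual_symm_apply (𝕜 := ℂ) (E := H)).symm
  have hnorm : ‖v‖ = ‖ρ‖ := by
    rw [hv]; exact LinearIsometryEquiv.norm_map _ ρ
  have hcoord : ∀ i, ‖ρ (e i)‖ = ‖(v : ℕ → ℂ) i‖ := by
    intro i
    rw [hρ, e, lp.inner_single_right, RCLike.inner_apply, one_mul, RCLike.norm_conj]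
  rw [← hnorm]
  exact (hasSum_normSq v).congr_fun fun i => by rw [hcoord]

/-- Hilbert–Schmidt predicate w.r.t. the standard basis. -/
def IsHS (A : H →L[ℂ] H) : Prop := Summable (fun i => ‖A (e i)‖ ^ 2)

lemma isHS_prod {A : H →L[ℂ] H} (hA : IsHS A) :
    Summable (fun ij : ℕ × ℕ => ‖(A (e ij.1) : ℕ → ℂ) ij.2‖ ^ 2) := by
  refine (summable_prod_of_nonneg (fun _ => by positivity)).2 ⟨fun i => ?_, ?_⟩
  · exact (hasSum_normSq (A (e i))).summable
  · refine hA.congr fun i => ?_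
    exact ((hasSum_normSq (A (e i))).tsum_eq).symm ▸ rfl

/-- row functional -/
def row (A : H →L[ℂ] H) (j : ℕ) : H →L[ℂ] ℂ := (π j).comp A

lemma row_apply (A : H →L[ℂ] H) (j : ℕ) (y : H) : row A j y = (A y : ℕ → ℂ) j := rfl

lemma summable_rows {A : H →L[ℂ] H} (hA : IsHS A) :
    Summable (fun j => ‖row A j‖ ^ 2) := by
  have hswap : Summable (fun ji : ℕ × ℕ => ‖(A (e ji.2) : ℕ → ℂ) ji.1‖ ^ 2) := by
    have := (isHS_prod hA).prod_symm
    exact this.congr fun ji => rfl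
  have h2 := ((summable_prod_of_nonneg (fun _ => by positivity)).1 hswap).2
  refine h2.congr fun j => ?_
  exact (parseval (row A j)).tsum_eq

lemma isHS_comp_left (L : H →L[ℂ] H) {A : H →L[ℂ] H} (hA : IsHS A) :
    IsHS (L.comp A) := by
  refine Summable.of_nonneg_of_le (fun i => by positivity) (fun i => ?_)
    (hA.mul_left (‖L‖ ^ 2))
  have h1 : ‖L (A (e i))‖ ≤ ‖L‖ * ‖A (e i)‖ := L.le_opNorm _
  calc ‖L.comp A (e i)‖ ^ 2 = ‖L (A (e i))‖ ^ 2 := rfl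
    _ ≤ (‖L‖ * ‖A (e i)‖) ^ 2 := by
        exact pow_le_pow_left₀ (norm_nonneg _) h1 2
    _ = ‖L‖ ^ 2 * ‖A (e i)‖ ^ 2 := by ring

lemma isHS_comp_right {A : H →L[ℂ] H} (hA : IsHS A) (P : H →L[ℂ] H) :
    IsHS (A.comp P) := by
  have hrows := summable_rows hA
  -- Q (j,i) = ‖row A j (P (e i))‖²
  have hslice : ∀ j, HasSum (fun i => ‖row A j (P (e i))‖ ^ 2)
      (‖(row A j).comp P‖ ^ 2) := fun j => parseval ((row A j).comp P)
  have hQ : Summable (fun ji : ℕ × ℕ => ‖row A ji.1 (P (e ji.2))‖ ^ 2) := by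
    refine (summable_prod_of_nonneg (fun _ => by positivity)).2 ⟨fun j => ?_, ?_⟩
    · exact (hslice j).summable
    · refine Summable.of_nonneg_of_le (fun j => ?_) (fun j => ?_)
        (hrows.mul_left (‖P‖ ^ 2))
      · exact tsum_nonneg fun _ => by positivity
      · rw [show (∑' (y:ℕ), ‖row A (j, y).1 (P (e (j, y).2))‖ ^ 2)
              = ∑' (i:ℕ), ‖row A j (P (e i))‖ ^ 2 from rfl, (hslice j).tsum_eq]
        have h1 : ‖(row A j).comp P‖ ≤ ‖row A j‖ * ‖P‖ :=
          ContinuousLinearMap.opNorm_comp_le _ _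
        calc ‖(row A j).comp P‖ ^ 2 ≤ (‖row A j‖ * ‖P‖) ^ 2 :=
              pow_le_pow_left₀ (norm_nonneg _) h1 2
          _ = ‖P‖ ^ 2 * ‖row A j‖ ^ 2 := by ring
  have hQswap : Summable (fun ij : ℕ × ℕ => ‖row A ij.2 (P (e ij.1))‖ ^ 2) := by
    have := hQ.prod_symm
    exact this.congr fun ij => rfl
  have h2 := ((summable_prod_of_nonneg (fun _ => by positivity)).1 hQswap).2
  refine h2.congr fun i => ?_
  refine Eq.trans ?_ (hasSum_normSq ((A.comp P) (e i))).tsum_eq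
  rfl

/-- trace along the standard basis -/
def tr (A : H →L[ℂ] H) : ℂ := ∑' k, (A (e k) : ℕ → ℂ) k

lemma hasSum_coord_expand (A : H →L[ℂ] H) (w : H) (k : ℕ) :
    HasSum (fun j => (w : ℕ → ℂ) j * (A (e j) : ℕ → ℂ) k) ((A w : ℕ → ℂ) k) := by
  have h1 := ((hasSum_single' w).mapL A).mapL (π k)
  refine h1.congr_fun fun j => ?_
  rw [map_smul, π_apply, lp.coeFn_smul]
  simp [smul_eq_mul]

lemma rpow2 (x : ℝ) : x ^ (2:ℝ) = x ^ 2 := by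
  rw [show (2:ℝ) = ((2:ℕ):ℝ) by norm_num, Real.rpow_natCast]

lemma tr_comp_comm {A B : H →L[ℂ] H} (hA : IsHS A) (hB : IsHS B) :
    tr (A.comp B) = tr (B.comp A) := by
  set g : ℕ × ℕ → ℂ :=
    fun kj => (B (e kj.1) : ℕ → ℂ) kj.2 * (A (e kj.2) : ℕ → ℂ) kj.1 with hg
  have hBnorm := isHS_prod hB
  have hAnorm : Summable (fun kj : ℕ × ℕ => ‖(A (e kj.2) : ℕ → ℂ) kj.1‖ ^ 2) := by
    have := (isHS_prod hA).prod_symm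
    exact this.congr fun _ => rfl
  have hgsum : Summable g := by
    refine Summable.of_norm (Summable.of_nonneg_of_le (fun kj => norm_nonneg _)
      (fun kj => ?_) ((hBnorm.add hAnorm).mul_left (1/2)))
    rw [hg]
    simp only [norm_mul]
    set a := ‖(B (e kj.1) : ℕ → ℂ) kj.2‖ with ha
    set b := ‖(A (e kj.2) : ℕ → ℂ) kj.1‖ with hb
    have h1 : 0 ≤ (a - b) ^ 2 := sq_nonneg _
    nlinarith
  have hrow : ∀ k, HasSum (fun j => g (k, j)) ((A (B (e k)) : ℕ → ℂ) k) := fun k =>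
    hasSum_coord_expand A (B (e k)) k
  have hcol : ∀ j, HasSum (fun k => g (k, j)) ((B (A (e j)) : ℕ → ℂ) j) := fun j =>
    (hasSum_coord_expand B (A (e j)) j).congr_fun fun k => mul_comm _ _
  have h1 : tr (A.comp B) = ∑' (p : ℕ × ℕ), g p := by
    rw [tr, Summable.tsum_prod' hgsum (fun k => (hrow k).summable)]
    exact tsum_congr fun k => ((hrow k).tsum_eq).symm
  have h2 : tr (B.comp A) = ∑' (p : ℕ × ℕ), g p.swap := by
    rw [tr, Summable.tsum_prod' (hgsum.prod_symm) (fun j => (hcol j).summable)]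
    exact tsum_congr fun j => ((hcol j).tsum_eq).symm
  rw [h1, h2]
  exact ((Equiv.prodComm ℕ ℕ).tsum_eq g).symm

lemma mkCLM_mem {Y : Type*} [NormedAddCommGroup Y] [NormedSpace ℂ Y] {g : Y → ℕ → ℂ}
    {c : ℝ}
    (hbd : ∀ y (F : Finset ℕ), ∑ k ∈ F, ‖g y k‖ ^ 2 ≤ (c * ‖y‖) ^ 2) (y : Y) :
    Memℓp (g y) 2 := by
  apply memℓp_gen
  rw [two_toReal]
  simp only [rpow2]
  exact summable_of_sum_le (fun k => by positivity) (hbd y)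

/-- generic constructor of continuous linear maps into ℓ² -/
def mkCLM (Y : Type*) [NormedAddCommGroup Y] [NormedSpace ℂ Y] (g : Y → ℕ → ℂ)
    (hadd : ∀ y z k, g (y + z) k = g y k + g z k)
    (hsmul : ∀ (c : ℂ) y k, g (c • y) k = c * g y k)
    (c : ℝ) (hc : 0 ≤ c)
    (hbd : ∀ y (F : Finset ℕ), ∑ k ∈ F, ‖g y k‖ ^ 2 ≤ (c * ‖y‖) ^ 2) :
    Y →L[ℂ] H :=
  LinearMap.mkContinuous
    { toFun := fun y => (⟨g y, mkCLM_mem hbd y⟩ : H)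
      map_add' := fun y z => by
        ext k
        exact hadd y z k
      map_smul' := fun c y => by
        ext k
        exact hsmul c y k }
    c (fun y => by
      show ‖(⟨g y, mkCLM_mem hbd y⟩ : H)‖ ≤ c * ‖y‖
      apply lp.norm_le_of_forall_sum_le (p := 2) (by rw [two_toReal]; norm_num)
        (mul_nonneg hc (norm_nonneg y))
      intro s
      rw [two_toReal]
      simp only [rpow2]
      exact hbd y s)

lemma mkCLM_apply (Y : Type*) [NormedAddCommGroup Y] [NormedSpace ℂ Y] (g : Y → ℕ → ℂ)
    (hadd) (hsmul) (c : ℝ) (hc) (hbd) (y : Y) (k : ℕ) :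
    ((mkCLM Y g hadd hsmul c hc hbd y : H) : ℕ → ℂ) k = g y k := rfl

lemma norm_e (i : ℕ) : ‖e i‖ = 1 := by
  simp only [e]
  have h := lp.norm_single (p := 2) (E := fun _ : ℕ => ℂ)
    (by norm_num : (0:ℝ≥0∞) < 2) i (1:ℂ)
  simpa using h

lemma mkCLM_norm_le (Y : Type*) [NormedAddCommGroup Y] [NormedSpace ℂ Y] (g : Y → ℕ → ℂ)
    (hadd) (hsmul) (c : ℝ) (hc) (hbd) :
    ‖mkCLM Y g hadd hsmul c hc hbd‖ ≤ c :=
  LinearMap.mkContinuous_norm_le _ hc _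

end APaux

end APaux

open APaux

set_option maxSynthPendingDepth 2 in
set_option maxHeartbeats 3000000 in
/-- for `0 < r ≤ 1`, `1 ≤ p ≤ 2` with `1/r = 1/2 + 1/p` and `p'`
conjugate to `p`, every complex Banach space has `AP_{[r,p']}`: any tensor
element `∑ λ_k x'_k ⊗ x_k` (with `∑|λ_k|^r < ∞`, `(x'_k)` bounded, `(x_k)` weakly
`p'`-summable) inducing the zero operator has vanishing generalized trace against
every `U : X → X**`. -/
theorem ap_r_pdual (r p : ℝ) (p' : ℝ≥0∞)
    (hr0 : 0 < r) (hr1 : r ≤ 1) (hp1 : 1 ≤ p) (hp2 : p ≤ 2)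
    (hrp : 1 / r = 1 / 2 + 1 / p)
    (hp' : 1 / ENNReal.ofReal p + 1 / p' = 1)
    (X : Type*) [NormedAddCommGroup X] [NormedSpace ℂ X] [CompleteSpace X]
    (lam : ℕ → ℂ) (hlam : Summable (fun k => ‖lam k‖ ^ r))
    (x' : ℕ → X →L[ℂ] ℂ) (hx' : ∃ M, ∀ k, ‖x' k‖ ≤ M)
    (x : ℕ → X) (hx : WeaklyQSummable p' x)
    (hzero : ∀ y : X, ∑' k, (lam k * (x' k) y) • x k = 0)
    (U : X →L[ℂ] ((X →L[ℂ] ℂ) →L[ℂ] ℂ)) :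
    ∑' k, lam k * (U (x k)) (x' k) = 0 := by
  classical
  obtain ⟨M, hM⟩ := hx'
  have hM0 : 0 ≤ M := le_trans (norm_nonneg _) (hM 0)
  have hr0' : r ≠ 0 := ne_of_gt hr0
  have hp0 : (0:ℝ) < p := lt_of_lt_of_le one_pos hp1
  -- scalar sequences
  set t : ℕ → ℝ := fun k => ‖lam k‖ ^ r with ht_def
  have ht_nonneg : ∀ k, 0 ≤ t k := fun k => Real.rpow_nonneg (norm_nonneg _) r
  have ht_sum : Summable t := hlam
  set S : ℝ := ∑' k, t k with hS_def
  have hS0 : 0 ≤ S := tsum_nonneg ht_nonneg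
  have ht_le_S : ∀ k, t k ≤ S := fun k => Summable.le_tsum ht_sum k fun j _ => ht_nonneg j
  have ht_pos : ∀ k, lam k ≠ 0 → 0 < t k := fun k hk =>
    Real.rpow_pos_of_pos (norm_pos_iff.2 hk) r
  have hnorm_lam : ∀ k, t k ^ (1/r) = ‖lam k‖ := by
    intro k
    show (‖lam k‖ ^ r) ^ (1/r) = ‖lam k‖
    rw [← Real.rpow_mul (norm_nonneg _), mul_one_div, div_self hr0', Real.rpow_one]
  have hp'0 : p' ≠ 0 := by
    intro h
    rw [h] at hp'
    simp at hp'
  -- bound on (x k)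
  obtain ⟨Mx, hMx0, hMx⟩ : ∃ Mx, 0 ≤ Mx ∧ ∀ k, ‖x k‖ ≤ Mx := by
    by_cases htop : p' = ⊤
    · obtain ⟨Mx, hMx⟩ := hx.1 htop
      exact ⟨max Mx 0, le_max_right _ _, fun k => le_trans (hMx k) (le_max_left _ _)⟩
    · obtain ⟨C, hC⟩ := hx.2 htop
      have hq_pos : 0 < p'.toReal :=
        lt_of_le_of_ne ENNReal.toReal_nonneg (Ne.symm (ENNReal.toReal_ne_zero.2 ⟨hp'0, htop⟩))
      have hC0 : 0 ≤ C := by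
        have h1 := hC 0 (by simp) {0}
        simpa [Real.zero_rpow (ne_of_gt hq_pos)] using h1
      refine ⟨C ^ (1 / p'.toReal), Real.rpow_nonneg hC0 _, fun k => ?_⟩
      apply NormedSpace.norm_le_dual_bound ℂ (x k) (Real.rpow_nonneg hC0 _)
      intro f
      rcases eq_or_ne f 0 with rfl | hf
      · simp
      · have hfn : (0:ℝ) < ‖f‖ := norm_pos_iff.2 hf
        set g : X →L[ℂ] ℂ := ((‖f‖:ℝ)⁻¹ : ℂ) • f with hg
        have hgn : ‖g‖ ≤ 1 := by
          have h6 : ‖g‖ = ‖((‖f‖:ℝ)⁻¹ : ℂ)‖ * ‖f‖ := by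
            rw [hg]; exact norm_smul ((‖f‖:ℝ)⁻¹ : ℂ) f
          rw [h6]
          simp only [Complex.norm_real, norm_inv, Real.norm_eq_abs, abs_of_pos hfn]
          rw [inv_mul_cancel₀ (ne_of_gt hfn)]
        have h1 := hC g hgn {k}
        rw [Finset.sum_singleton] at h1
        have h2 : ‖g (x k)‖ ≤ C ^ (1 / p'.toReal) := by
          have h3 : (‖g (x k)‖ ^ p'.toReal) ^ (1/p'.toReal) ≤ C ^ (1/p'.toReal) :=
            Real.rpow_le_rpow (Real.rpow_nonneg (norm_nonneg _) _) h1 (by positivity)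
          rwa [← Real.rpow_mul (norm_nonneg _), mul_one_div,
            div_self (ne_of_gt hq_pos), Real.rpow_one] at h3
        have h4 : ‖g (x k)‖ = ‖f‖⁻¹ * ‖f (x k)‖ := by
          rw [hg]
          simp only [ContinuousLinearMap.smul_apply, norm_smul, norm_inv,
            Complex.norm_real, Real.norm_eq_abs, abs_of_pos hfn]
        rw [h4] at h2
        have h5 := mul_le_mul_of_nonneg_left h2 (le_of_lt hfn)
        rw [← mul_assoc, mul_inv_cancel₀ (ne_of_gt hfn), one_mul] at h5
        linarith [h5]
  -- the scalar decomposition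
  set γ : ℕ → ℝ := fun k => t k ^ ((1:ℝ)/2) with hγ_def
  set δ : ℕ → ℝ := fun k => if lam k = 0 then 0 else t k ^ (1/p - 1/2) with hδ_def
  set α : ℕ → ℂ := fun k =>
    if lam k = 0 then 0 else (lam k / (‖lam k‖ : ℂ)) * ((t k ^ ((1:ℝ)/2) : ℝ) : ℂ) with hα_def
  have hγ0 : ∀ k, 0 ≤ γ k := fun k => Real.rpow_nonneg (ht_nonneg k) _
  have hδ0 : ∀ k, 0 ≤ δ k := by
    intro k
    simp only [hδ_def]
    split_ifs
    · exact le_refl 0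
    · exact Real.rpow_nonneg (ht_nonneg k) _
  have hγsq : ∀ k, γ k ^ 2 = t k := by
    intro k
    simp only [hγ_def]
    rw [← Real.rpow_natCast (t k ^ ((1:ℝ)/2)) 2, ← Real.rpow_mul (ht_nonneg k)]
    norm_num
  have hδsq : ∀ k, lam k ≠ 0 → δ k ^ 2 = t k ^ (2/p - 1) := by
    intro k hk
    simp only [hδ_def, if_neg hk]
    rw [← Real.rpow_natCast (t k ^ (1/p - 1/2)) 2, ← Real.rpow_mul (ht_nonneg k)]
    congr 1
    ring
  have hα_sq : ∀ k, ‖α k‖ ^ 2 ≤ t k := by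
    intro k
    simp only [hα_def]
    split_ifs with h
    · simpa using ht_nonneg k
    · rw [norm_mul, norm_div, Complex.norm_real, Real.norm_eq_abs,
        abs_of_nonneg (norm_nonneg (lam k)), div_self (norm_ne_zero_iff.2 h), one_mul,
        Complex.norm_real, Real.norm_eq_abs, abs_of_nonneg (Real.rpow_nonneg (ht_nonneg k) _),
        ← Real.rpow_natCast (t k ^ ((1:ℝ)/2)) 2, ← Real.rpow_mul (ht_nonneg k)]
      norm_num
  have hαγδ : ∀ k, α k * ((γ k : ℝ) : ℂ) * ((δ k : ℝ) : ℂ) = lam k := by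
    intro k
    rcases eq_or_ne (lam k) 0 with h | h
    · rw [hα_def]
      simp [h]
    · have hpos := ht_pos k h
      have hreal : t k ^ ((1:ℝ)/2) * t k ^ ((1:ℝ)/2) * t k ^ (1/p - 1/2)
          = ‖lam k‖ := by
        rw [← Real.rpow_add hpos, ← Real.rpow_add hpos]
        rw [show (1:ℝ)/2 + 1/2 + (1/p - 1/2) = 1/r by rw [hrp]; ring]
        exact hnorm_lam k
      simp only [hα_def, hγ_def, hδ_def, if_neg h]
      rw [div_mul_eq_mul_div, div_mul_eq_mul_div, div_mul_eq_mul_div]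
      rw [div_eq_iff (by exact_mod_cast norm_ne_zero_iff.2 h : ((‖lam k‖:ℝ):ℂ) ≠ 0)]
      rw [← hreal]
      push_cast
      ring
  -- ℓ¹ bound for lam
  have hlam1 : Summable fun k => ‖lam k‖ := by
    have h0 : Filter.Tendsto t Filter.atTop (nhds 0) := ht_sum.tendsto_atTop_zero
    have hev : ∀ᶠ k in Filter.atTop, t k ≤ 1 := h0.eventually (eventually_le_nhds zero_lt_one)
    obtain ⟨N, hN⟩ := Filter.eventually_atTop.1 hev
    rw [← summable_nat_add_iff N]
    refine Summable.of_nonneg_of_le (fun k => norm_nonneg _) (fun k => ?_)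
      ((summable_nat_add_iff N).2 ht_sum)
    have h1 : t (k + N) ≤ 1 := hN _ (Nat.le_add_left N k)
    rcases eq_or_ne (lam (k + N)) 0 with h | h
    · rw [h, norm_zero]; exact ht_nonneg _
    · have hpos := ht_pos _ h
      rw [← hnorm_lam (k + N)]
      calc t (k + N) ^ (1/r) ≤ t (k + N) ^ (1:ℝ) :=
            Real.rpow_le_rpow_of_exponent_ge hpos h1
              (by rw [le_div_iff₀ hr0]; linarith)
        _ = t (k + N) := Real.rpow_one _
  -- KEY square bound
  obtain ⟨C₂, hC₂0, hC₂⟩ : ∃ C₂, 0 ≤ C₂ ∧ ∀ f : X →L[ℂ] ℂ, ‖f‖ ≤ 1 →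
      ∀ F : Finset ℕ, ∑ k ∈ F, δ k ^ 2 * ‖f (x k)‖ ^ 2 ≤ C₂ := by
    by_cases htop : p' = ⊤
    · have hpe : p = 1 := by
        rw [htop] at hp'
        rw [ENNReal.div_top, add_zero, one_div, ENNReal.inv_eq_one] at hp'
        have h2 := congrArg ENNReal.toReal hp'
        rwa [ENNReal.toReal_ofReal (le_of_lt hp0), ENNReal.toReal_one] at h2
      refine ⟨S * Mx ^ 2, by positivity, fun f hf F => ?_⟩
      have hterm : ∀ k, δ k ^ 2 * ‖f (x k)‖ ^ 2 ≤ t k * Mx ^ 2 := by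
        intro k
        rcases eq_or_ne (lam k) 0 with h | h
        · simp only [hδ_def, if_pos h]
          rw [zero_pow two_ne_zero, zero_mul]
          positivity
        · have hδ2 : δ k ^ 2 = t k := by
            rw [hδsq k h, hpe, show (2:ℝ)/1 - 1 = 1 by norm_num, Real.rpow_one]
          rw [hδ2]
          have h1 : ‖f (x k)‖ ≤ Mx := by
            calc ‖f (x k)‖ ≤ ‖f‖ * ‖x k‖ := f.le_opNorm _
              _ ≤ 1 * Mx := mul_le_mul hf (hMx k) (norm_nonneg _) zero_le_one
              _ = Mx := one_mul _
          exact mul_le_mul_of_nonneg_left (pow_le_pow_left₀ (norm_nonneg _) h1 2)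
            (ht_nonneg k)
      calc ∑ k ∈ F, δ k ^ 2 * ‖f (x k)‖ ^ 2 ≤ ∑ k ∈ F, t k * Mx ^ 2 :=
            Finset.sum_le_sum fun k _ => hterm k
        _ = (∑ k ∈ F, t k) * Mx ^ 2 := by rw [Finset.sum_mul]
        _ ≤ S * Mx ^ 2 := mul_le_mul_of_nonneg_right
            (Summable.sum_le_tsum F (fun k _ => ht_nonneg k) ht_sum) (by positivity)
    · obtain ⟨C, hC⟩ := hx.2 htop
      have hq_pos : 0 < p'.toReal :=
        lt_of_le_of_ne ENNReal.toReal_nonneg (Ne.symm (ENNReal.toReal_ne_zero.2 ⟨hp'0, htop⟩))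
      have hC0 : 0 ≤ C := by
        have h1 := hC 0 (by simp) {0}
        simpa [Real.zero_rpow (ne_of_gt hq_pos)] using h1
      have hpq : 1/p + 1/p'.toReal = 1 := by
        have hfin1 : 1 / ENNReal.ofReal p ≠ ⊤ := by
          rw [one_div]
          exact ENNReal.inv_ne_top.2 (ne_of_gt (ENNReal.ofReal_pos.2 hp0))
        have hfin2 : 1 / p' ≠ ⊤ := by
          rw [one_div]
          exact ENNReal.inv_ne_top.2 hp'0
        have h2 := congrArg ENNReal.toReal hp'
        rw [ENNReal.toReal_add hfin1 hfin2, ENNReal.toReal_one, one_div, one_div,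
          ENNReal.toReal_inv, ENNReal.toReal_inv,
          ENNReal.toReal_ofReal (le_of_lt hp0)] at h2
        rw [one_div, one_div]
        exact h2
      have ha0 : 0 ≤ 2/p - 1 := by
        rw [sub_nonneg, le_div_iff₀ hp0]
        linarith
      have ha1 : 2/p - 1 ≤ 1 := by
        have h1 : 2/p ≤ 2 := by
          rw [div_le_iff₀ hp0]
          linarith
        linarith
      have hqa : p'.toReal * (1 - (2/p - 1)) = 2 := by
        have h1q : 1/p'.toReal = 1 - 1/p := by linarith
        have h2 : 1 - (2/p - 1) = 2 * (1/p'.toReal) := by rw [h1q]; ring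
        rw [h2]
        field_simp
      refine ⟨S + C, by positivity, fun f hf F => ?_⟩
      have hterm : ∀ k, δ k ^ 2 * ‖f (x k)‖ ^ 2 ≤ t k + ‖f (x k)‖ ^ p'.toReal := by
        intro k
        have hs0 : (0:ℝ) ≤ ‖f (x k)‖ ^ p'.toReal := Real.rpow_nonneg (norm_nonneg _) _
        rcases eq_or_ne (lam k) 0 with h | h
        · simp only [hδ_def, if_pos h]
          rw [zero_pow two_ne_zero, zero_mul]
          positivity
        · have hδ2 : δ k ^ 2 = t k ^ (2/p - 1) := hδsq k h
          have hs2 : ‖f (x k)‖ ^ 2 = (‖f (x k)‖ ^ p'.toReal) ^ (1 - (2/p - 1)) := by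
            rw [← Real.rpow_natCast (‖f (x k)‖) 2, ← Real.rpow_mul (norm_nonneg _), hqa]
            norm_num
          rw [hδ2, hs2]
          calc t k ^ (2/p - 1) * (‖f (x k)‖ ^ p'.toReal) ^ (1 - (2/p - 1))
              ≤ (2/p - 1) * t k + (1 - (2/p - 1)) * ‖f (x k)‖ ^ p'.toReal :=
                Real.geom_mean_le_arith_mean2_weighted ha0 (by linarith)
                  (ht_nonneg k) hs0 (by ring)
            _ ≤ t k + ‖f (x k)‖ ^ p'.toReal := by
                have h1 : (2/p - 1) * t k ≤ 1 * t k :=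
                  mul_le_mul_of_nonneg_right ha1 (ht_nonneg k)
                have h2 : (1 - (2/p - 1)) * ‖f (x k)‖ ^ p'.toReal
                    ≤ 1 * ‖f (x k)‖ ^ p'.toReal :=
                  mul_le_mul_of_nonneg_right (by linarith) hs0
                linarith
      calc ∑ k ∈ F, δ k ^ 2 * ‖f (x k)‖ ^ 2
          ≤ ∑ k ∈ F, (t k + ‖f (x k)‖ ^ p'.toReal) := Finset.sum_le_sum fun k _ => hterm k
        _ = ∑ k ∈ F, t k + ∑ k ∈ F, ‖f (x k)‖ ^ p'.toReal := Finset.sum_add_distrib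
        _ ≤ S + C := add_le_add (Summable.sum_le_tsum F (fun k _ => ht_nonneg k) ht_sum) (hC f hf F)
  -- scaled version of the key bound
  have hC₂' : ∀ f : X →L[ℂ] ℂ, ∀ F : Finset ℕ,
      ∑ k ∈ F, δ k ^ 2 * ‖f (x k)‖ ^ 2 ≤ C₂ * ‖f‖ ^ 2 := by
    intro f F
    rcases eq_or_ne f 0 with rfl | hf
    · simp
    · have hfn : (0:ℝ) < ‖f‖ := norm_pos_iff.2 hf
      have hgn : ‖((‖f‖:ℝ)⁻¹ : ℂ) • f‖ ≤ 1 := by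
        have h6 : ‖((‖f‖:ℝ)⁻¹ : ℂ) • f‖ = ‖((‖f‖:ℝ)⁻¹ : ℂ)‖ * ‖f‖ :=
          norm_smul ((‖f‖:ℝ)⁻¹ : ℂ) f
        rw [h6]
        simp only [Complex.norm_real, norm_inv, Real.norm_eq_abs, abs_of_pos hfn]
        rw [inv_mul_cancel₀ (ne_of_gt hfn)]
      have h1 := hC₂ _ hgn F
      have h2 : ∀ k, δ k ^ 2 * ‖(((‖f‖:ℝ)⁻¹ : ℂ) • f) (x k)‖ ^ 2
          = δ k ^ 2 * ‖f (x k)‖ ^ 2 * (‖f‖⁻¹) ^ 2 := by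
        intro k
        rw [ContinuousLinearMap.smul_apply, norm_smul]
        simp only [Complex.norm_real, norm_inv, Real.norm_eq_abs, abs_of_pos hfn]
        ring
      rw [Finset.sum_congr rfl (fun k _ => h2 k), ← Finset.sum_mul] at h1
      have h3 := mul_le_mul_of_nonneg_right h1 (le_of_lt (pow_pos hfn 2))
      rw [mul_assoc, ← mul_pow, inv_mul_cancel₀ (ne_of_gt hfn), one_pow, mul_one] at h3
      exact h3
  -- finite-sum norm bound for the building blocks of B1
  have hfin : ∀ (ξ : APaux.H) (F : Finset ℕ),
      ‖∑ k ∈ F, (((δ k : ℝ) : ℂ) * (ξ : ℕ → ℂ) k) • x k‖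
        ≤ Real.sqrt C₂ * Real.sqrt (∑ k ∈ F, ‖(ξ : ℕ → ℂ) k‖ ^ 2) := by
    intro ξ F
    apply NormedSpace.norm_le_dual_bound ℂ _ (by positivity)
    intro f
    have hfv : f (∑ k ∈ F, (((δ k : ℝ) : ℂ) * (ξ : ℕ → ℂ) k) • x k)
        = ∑ k ∈ F, (((δ k : ℝ) : ℂ) * (ξ : ℕ → ℂ) k) * f (x k) := by
      rw [map_sum]
      exact Finset.sum_congr rfl fun k _ => by rw [map_smul, smul_eq_mul]
    rw [hfv]
    calc ‖∑ k ∈ F, (((δ k : ℝ) : ℂ) * (ξ : ℕ → ℂ) k) * f (x k)‖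
        ≤ ∑ k ∈ F, ‖(((δ k : ℝ) : ℂ) * (ξ : ℕ → ℂ) k) * f (x k)‖ := norm_sum_le _ _
      _ = ∑ k ∈ F, ‖(ξ : ℕ → ℂ) k‖ * (δ k * ‖f (x k)‖) := by
          refine Finset.sum_congr rfl fun k _ => ?_
          rw [norm_mul, norm_mul, Complex.norm_real, Real.norm_eq_abs,
            abs_of_nonneg (hδ0 k)]
          ring
      _ ≤ Real.sqrt (∑ k ∈ F, ‖(ξ : ℕ → ℂ) k‖ ^ 2)
          * Real.sqrt (∑ k ∈ F, (δ k * ‖f (x k)‖) ^ 2) := by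
          have hcs := Finset.sum_mul_sq_le_sq_mul_sq F (fun k => ‖(ξ : ℕ → ℂ) k‖)
            (fun k => δ k * ‖f (x k)‖)
          have hnn : (0:ℝ) ≤ ∑ k ∈ F, ‖(ξ : ℕ → ℂ) k‖ * (δ k * ‖f (x k)‖) :=
            Finset.sum_nonneg fun k _ => by positivity
          calc (∑ k ∈ F, ‖(ξ : ℕ → ℂ) k‖ * (δ k * ‖f (x k)‖))
              = Real.sqrt ((∑ k ∈ F, ‖(ξ : ℕ → ℂ) k‖ * (δ k * ‖f (x k)‖)) ^ 2) :=
                (Real.sqrt_sq hnn).symm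
            _ ≤ Real.sqrt ((∑ k ∈ F, ‖(ξ : ℕ → ℂ) k‖ ^ 2)
                * ∑ k ∈ F, (δ k * ‖f (x k)‖) ^ 2) := Real.sqrt_le_sqrt hcs
            _ = _ := Real.sqrt_mul (Finset.sum_nonneg fun k _ => by positivity) _
      _ ≤ Real.sqrt (∑ k ∈ F, ‖(ξ : ℕ → ℂ) k‖ ^ 2) * Real.sqrt (C₂ * ‖f‖ ^ 2) := by
          refine mul_le_mul_of_nonneg_left (Real.sqrt_le_sqrt ?_) (Real.sqrt_nonneg _)
          have h5 : ∀ k, (δ k * ‖f (x k)‖) ^ 2 = δ k ^ 2 * ‖f (x k)‖ ^ 2 := fun k => by ring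
          rw [Finset.sum_congr rfl fun k _ => h5 k]
          exact hC₂' f F
      _ = Real.sqrt C₂ * Real.sqrt (∑ k ∈ F, ‖(ξ : ℕ → ℂ) k‖ ^ 2) * ‖f‖ := by
          rw [Real.sqrt_mul hC₂0, Real.sqrt_sq (norm_nonneg f)]
          ring
  -- summability of the B1 series
  have hsum_b : ∀ ξ : APaux.H,
      Summable (fun k => (((δ k : ℝ) : ℂ) * (ξ : ℕ → ℂ) k) • x k) := by
    intro ξ
    rw [summable_iff_vanishing_norm]
    intro ε hε
    have hξ2 : Summable (fun k => ‖(ξ : ℕ → ℂ) k‖ ^ 2) := (hasSum_normSq ξ).summable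
    obtain ⟨s, hs⟩ := summable_iff_vanishing_norm.1 hξ2 ((ε / (Real.sqrt C₂ + 1)) ^ 2)
      (by positivity)
    refine ⟨s, fun F hF => ?_⟩
    have h2 := hs F hF
    have h3 : Real.sqrt (∑ k ∈ F, ‖(ξ : ℕ → ℂ) k‖ ^ 2) ≤ ε / (Real.sqrt C₂ + 1) := by
      have h4 : ∑ k ∈ F, ‖(ξ : ℕ → ℂ) k‖ ^ 2 ≤ (ε / (Real.sqrt C₂ + 1)) ^ 2 := by
        rw [Real.norm_eq_abs] at h2
        have h6 := le_abs_self (∑ k ∈ F, ‖(ξ : ℕ → ℂ) k‖ ^ 2)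
        linarith
      calc Real.sqrt (∑ k ∈ F, ‖(ξ : ℕ → ℂ) k‖ ^ 2)
          ≤ Real.sqrt ((ε / (Real.sqrt C₂ + 1)) ^ 2) := Real.sqrt_le_sqrt h4
        _ = ε / (Real.sqrt C₂ + 1) := Real.sqrt_sq (by positivity)
    calc ‖∑ k ∈ F, (((δ k : ℝ) : ℂ) * (ξ : ℕ → ℂ) k) • x k‖
        ≤ Real.sqrt C₂ * Real.sqrt (∑ k ∈ F, ‖(ξ : ℕ → ℂ) k‖ ^ 2) := hfin ξ F
      _ ≤ Real.sqrt C₂ * (ε / (Real.sqrt C₂ + 1)) :=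
          mul_le_mul_of_nonneg_left h3 (Real.sqrt_nonneg _)
      _ < ε := by
          rw [← mul_div_assoc, div_lt_iff₀ (by positivity)]
          nlinarith [Real.sqrt_nonneg C₂]
  -- the operator B1 : ℓ² → X
  set B1 : APaux.H →L[ℂ] X := LinearMap.mkContinuous
    { toFun := fun ξ => ∑' k, (((δ k : ℝ) : ℂ) * (ξ : ℕ → ℂ) k) • x k
      map_add' := fun ξ η => by
        rw [← Summable.tsum_add (hsum_b ξ) (hsum_b η)]
        refine tsum_congr fun k => ?_
        rw [lp.coeFn_add, Pi.add_apply, mul_add, add_smul]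
      map_smul' := fun c ξ => by
        rw [RingHom.id_apply, ← Summable.tsum_const_smul c (hsum_b ξ)]
        refine tsum_congr fun k => ?_
        rw [lp.coeFn_smul, Pi.smul_apply, smul_eq_mul, smul_smul]
        congr 1
        ring }
    (Real.sqrt C₂) (fun ξ => by
      show ‖∑' k, (((δ k : ℝ) : ℂ) * (ξ : ℕ → ℂ) k) • x k‖ ≤ Real.sqrt C₂ * ‖ξ‖
      refine le_of_tendsto' (hsum_b ξ).hasSum.norm fun F => ?_
      calc ‖∑ k ∈ F, (((δ k : ℝ) : ℂ) * (ξ : ℕ → ℂ) k) • x k‖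
          ≤ Real.sqrt C₂ * Real.sqrt (∑ k ∈ F, ‖(ξ : ℕ → ℂ) k‖ ^ 2) := hfin ξ F
        _ ≤ Real.sqrt C₂ * ‖ξ‖ := by
            refine mul_le_mul_of_nonneg_left ?_ (Real.sqrt_nonneg _)
            have h1 : ∑ k ∈ F, ‖(ξ : ℕ → ℂ) k‖ ^ 2 ≤ ‖ξ‖ ^ 2 := by
              rw [← (hasSum_normSq ξ).tsum_eq]
              exact Summable.sum_le_tsum F (fun k _ => by positivity) (hasSum_normSq ξ).summable
            calc Real.sqrt (∑ k ∈ F, ‖(ξ : ℕ → ℂ) k‖ ^ 2)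
                ≤ Real.sqrt (‖ξ‖ ^ 2) := Real.sqrt_le_sqrt h1
              _ = ‖ξ‖ := Real.sqrt_sq (norm_nonneg ξ)) with hB1_def
  have hB1_apply : ∀ ξ : APaux.H,
      B1 ξ = ∑' k, (((δ k : ℝ) : ℂ) * (ξ : ℕ → ℂ) k) • x k := fun _ => rfl
  have hB1e : ∀ k, B1 (e k) = ((δ k : ℝ) : ℂ) • x k := by
    intro k
    rw [hB1_apply]
    rw [tsum_eq_single k (fun j hj => by
      rw [e_apply, if_neg hj, mul_zero, zero_smul])]
    rw [e_apply_self, mul_one]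
  -- the operator Φ : X** → ℓ²
  set Φ : ((X →L[ℂ] ℂ) →L[ℂ] ℂ) →L[ℂ] APaux.H :=
    mkCLM ((X →L[ℂ] ℂ) →L[ℂ] ℂ) (fun y'' k => α k * y'' (x' k))
      (fun y z k => by beta_reduce; rw [ContinuousLinearMap.add_apply]; ring)
      (fun c y k => by beta_reduce; rw [ContinuousLinearMap.smul_apply, smul_eq_mul]; ring)
      (Real.sqrt S * M) (by positivity)
      (fun y'' F => by
        have hterm : ∀ k, ‖α k * y'' (x' k)‖ ^ 2 ≤ t k * (M * ‖y''‖) ^ 2 := by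
          intro k
          rw [norm_mul, mul_pow]
          have h1 : ‖y'' (x' k)‖ ≤ M * ‖y''‖ := by
            calc ‖y'' (x' k)‖ ≤ ‖y''‖ * ‖x' k‖ := y''.le_opNorm _
              _ ≤ ‖y''‖ * M := mul_le_mul_of_nonneg_left (hM k) (norm_nonneg y'')
              _ = M * ‖y''‖ := mul_comm _ _
          exact mul_le_mul (hα_sq k) (pow_le_pow_left₀ (norm_nonneg _) h1 2)
            (by positivity) (ht_nonneg k)
        calc ∑ k ∈ F, ‖α k * y'' (x' k)‖ ^ 2 ≤ ∑ k ∈ F, t k * (M * ‖y''‖) ^ 2 :=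
              Finset.sum_le_sum fun k _ => hterm k
          _ = (∑ k ∈ F, t k) * (M * ‖y''‖) ^ 2 := by rw [Finset.sum_mul]
          _ ≤ S * (M * ‖y''‖) ^ 2 := mul_le_mul_of_nonneg_right
              (Summable.sum_le_tsum F (fun k _ => ht_nonneg k) ht_sum) (by positivity)
          _ = (Real.sqrt S * M * ‖y''‖) ^ 2 := by
              rw [show (Real.sqrt S * M * ‖y''‖) ^ 2
                  = Real.sqrt S ^ 2 * (M * ‖y''‖) ^ 2 by ring, Real.sq_sqrt hS0]) with hΦ_def
  have hΦc : ∀ (y'' : (X →L[ℂ] ℂ) →L[ℂ] ℂ) (k : ℕ),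
      ((Φ y'' : APaux.H) : ℕ → ℂ) k = α k * y'' (x' k) := fun _ _ => rfl
  -- the diagonal operator Dγ : ℓ² → ℓ²
  set Dγ : APaux.H →L[ℂ] APaux.H :=
    mkCLM APaux.H (fun ξ k => ((γ k : ℝ) : ℂ) * (ξ : ℕ → ℂ) k)
      (fun ξ η k => by beta_reduce; rw [lp.coeFn_add, Pi.add_apply]; ring)
      (fun c ξ k => by beta_reduce; rw [lp.coeFn_smul, Pi.smul_apply, smul_eq_mul]; ring)
      (Real.sqrt S) (Real.sqrt_nonneg S)
      (fun ξ F => by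
        have hterm : ∀ k, ‖((γ k : ℝ) : ℂ) * (ξ : ℕ → ℂ) k‖ ^ 2
            ≤ S * ‖(ξ : ℕ → ℂ) k‖ ^ 2 := by
          intro k
          rw [norm_mul, mul_pow, Complex.norm_real, Real.norm_eq_abs,
            abs_of_nonneg (hγ0 k), hγsq k]
          exact mul_le_mul_of_nonneg_right (ht_le_S k) (by positivity)
        calc ∑ k ∈ F, ‖((γ k : ℝ) : ℂ) * (ξ : ℕ → ℂ) k‖ ^ 2
            ≤ ∑ k ∈ F, S * ‖(ξ : ℕ → ℂ) k‖ ^ 2 := Finset.sum_le_sum fun k _ => hterm k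
          _ = S * ∑ k ∈ F, ‖(ξ : ℕ → ℂ) k‖ ^ 2 := by rw [Finset.mul_sum]
          _ ≤ S * ‖ξ‖ ^ 2 := mul_le_mul_of_nonneg_left (by
                rw [← (hasSum_normSq ξ).tsum_eq]
                exact Summable.sum_le_tsum F (fun k _ => by positivity)
                  (hasSum_normSq ξ).summable) hS0
          _ = (Real.sqrt S * ‖ξ‖) ^ 2 := by rw [mul_pow, Real.sq_sqrt hS0]) with hDγ_def
  have hDc : ∀ (ξ : APaux.H) (k : ℕ),
      ((Dγ ξ : APaux.H) : ℕ → ℂ) k = ((γ k : ℝ) : ℂ) * (ξ : ℕ → ℂ) k := fun _ _ => rfl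
  have hDe : ∀ i, Dγ (e i) = ((γ i : ℝ) : ℂ) • e i := by
    intro i
    apply lp.ext
    funext k
    rw [hDc, lp.coeFn_smul, Pi.smul_apply, smul_eq_mul]
    rcases eq_or_ne k i with rfl | h
    · rfl
    · rw [e_apply, if_neg h, mul_zero, mul_zero]
  -- summability of the hzero series
  have hzsum : ∀ y : X, Summable fun k => (lam k * x' k y) • x k := by
    intro y
    refine Summable.of_norm (Summable.of_nonneg_of_le (fun k => norm_nonneg _)
      (fun k => ?_) (hlam1.mul_right (M * ‖y‖ * Mx)))
    rw [norm_smul, norm_mul]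
    calc ‖lam k‖ * ‖x' k y‖ * ‖x k‖
        ≤ ‖lam k‖ * (M * ‖y‖) * Mx := by
          refine mul_le_mul (mul_le_mul_of_nonneg_left ?_ (norm_nonneg _)) (hMx k)
            (norm_nonneg _) (by positivity)
          calc ‖x' k y‖ ≤ ‖x' k‖ * ‖y‖ := (x' k).le_opNorm y
            _ ≤ M * ‖y‖ := mul_le_mul_of_nonneg_right (hM k) (norm_nonneg y)
      _ = ‖lam k‖ * (M * ‖y‖ * Mx) := by ring
  -- the tensor kills all of X**
  have hI : ∀ y'' : (X →L[ℂ] ℂ) →L[ℂ] ℂ,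
      ∑' k, (lam k * y'' (x' k)) • x k = (0 : X) := by
    intro y''
    have hsum1 : Summable fun k => (lam k * y'' (x' k)) • x k := by
      refine Summable.of_norm (Summable.of_nonneg_of_le (fun k => norm_nonneg _)
        (fun k => ?_) (hlam1.mul_right (M * ‖y''‖ * Mx)))
      rw [norm_smul, norm_mul]
      calc ‖lam k‖ * ‖y'' (x' k)‖ * ‖x k‖
          ≤ ‖lam k‖ * (M * ‖y''‖) * Mx := by
            refine mul_le_mul (mul_le_mul_of_nonneg_left ?_ (norm_nonneg _)) (hMx k)
              (norm_nonneg _) (by positivity)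
            calc ‖y'' (x' k)‖ ≤ ‖y''‖ * ‖x' k‖ := y''.le_opNorm _
              _ ≤ ‖y''‖ * M := mul_le_mul_of_nonneg_left (hM k) (norm_nonneg y'')
              _ = M * ‖y''‖ := mul_comm _ _
        _ = ‖lam k‖ * (M * ‖y''‖ * Mx) := by ring
    apply NormedSpace.eq_zero_of_forall_dual_eq_zero ℂ
    intro f
    rw [ContinuousLinearMap.map_tsum f hsum1]
    have hg_sum : Summable fun k => (lam k * f (x k)) • x' k := by
      refine Summable.of_norm (Summable.of_nonneg_of_le (fun k => norm_nonneg _)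
        (fun k => ?_) (hlam1.mul_right (‖f‖ * Mx * M)))
      rw [show ‖(lam k * f (x k)) • x' k‖ = ‖lam k * f (x k)‖ * ‖x' k‖
        from norm_smul _ _, norm_mul]
      calc ‖lam k‖ * ‖f (x k)‖ * ‖x' k‖
          ≤ ‖lam k‖ * (‖f‖ * Mx) * M := by
            refine mul_le_mul (mul_le_mul_of_nonneg_left ?_ (norm_nonneg _)) (hM k)
              (norm_nonneg _) (by positivity)
            calc ‖f (x k)‖ ≤ ‖f‖ * ‖x k‖ := f.le_opNorm _
              _ ≤ ‖f‖ * Mx := mul_le_mul_of_nonneg_left (hMx k) (norm_nonneg f)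
        _ = ‖lam k‖ * (‖f‖ * Mx * M) := by ring
    have hg0 : (∑' k, (lam k * f (x k)) • x' k) = (0 : X →L[ℂ] ℂ) := by
      ext y
      rw [ContinuousLinearMap.zero_apply]
      have e1 : (∑' k, (lam k * f (x k)) • x' k) y
          = ∑' k, (lam k * f (x k)) * x' k y := by
        have h7 := ContinuousLinearMap.map_tsum (ContinuousLinearMap.apply ℂ ℂ y) hg_sum
        simpa only [ContinuousLinearMap.apply_apply, ContinuousLinearMap.smul_apply,
          smul_eq_mul] using h7
      have e2 : f (∑' k, (lam k * x' k y) • x k) = ∑' k, (lam k * x' k y) * f (x k) := by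
        rw [ContinuousLinearMap.map_tsum f (hzsum y)]
        exact tsum_congr fun k => by rw [map_smul, smul_eq_mul]
      rw [hzero y, map_zero] at e2
      rw [e1, show (fun k => (lam k * f (x k)) * x' k y)
          = fun k => (lam k * x' k y) * f (x k) from funext fun k => by ring, ← e2]
    calc ∑' k, f ((lam k * y'' (x' k)) • x k)
        = ∑' k, y'' ((lam k * f (x k)) • x' k) := by
          refine tsum_congr fun k => ?_
          rw [map_smul, map_smul, smul_eq_mul, smul_eq_mul]
          ring
      _ = y'' (∑' k, (lam k * f (x k)) • x' k) :=
          (ContinuousLinearMap.map_tsum y'' hg_sum).symm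
      _ = 0 := by rw [hg0, map_zero]
  -- the key vanishing composition
  have hBΦ : ∀ y'' : (X →L[ℂ] ℂ) →L[ℂ] ℂ, B1 (Dγ (Φ y'')) = 0 := by
    intro y''
    rw [hB1_apply]
    calc ∑' k, (((δ k : ℝ) : ℂ) * (Dγ (Φ y'') : ℕ → ℂ) k) • x k
        = ∑' k, (lam k * y'' (x' k)) • x k := by
          refine tsum_congr fun k => ?_
          rw [hDc, hΦc]
          congr 1
          rw [← hαγδ k]
          ring
      _ = 0 := hI y''
  -- the operator W and its square-zero property
  set F_op : APaux.H →L[ℂ] APaux.H := Φ.comp (U.comp B1) with hF_def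
  set W : APaux.H →L[ℂ] APaux.H := F_op.comp Dγ with hW_def
  have hW_apply : ∀ v, W v = Φ (U (B1 (Dγ v))) := fun _ => rfl
  have hW2 : ∀ v, W (W v) = 0 := by
    intro v
    rw [hW_apply (W v), hW_apply v, hBΦ (U (B1 (Dγ v))), map_zero, map_zero]
  -- Hilbert–Schmidt properties
  have hψ : ∀ j, ∃ ψ : APaux.H →L[ℂ] ℂ,
      (∀ i, ψ (e i) = ((δ i : ℝ) : ℂ) * (U (x i)) (x' j))
        ∧ ‖ψ‖ ≤ M * ‖U.comp B1‖ := by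
    intro j
    refine ⟨(ContinuousLinearMap.apply ℂ ℂ (x' j)).comp (U.comp B1), fun i => ?_, ?_⟩
    · show (U (B1 (e i))) (x' j) = _
      rw [hB1e i, map_smul, ContinuousLinearMap.smul_apply, smul_eq_mul]
    · calc ‖(ContinuousLinearMap.apply ℂ ℂ (x' j)).comp (U.comp B1)‖
          ≤ ‖ContinuousLinearMap.apply ℂ ℂ (x' j)‖ * ‖U.comp B1‖ :=
            ContinuousLinearMap.opNorm_comp_le _ _
        _ ≤ M * ‖U.comp B1‖ := by
            refine mul_le_mul_of_nonneg_right ?_ (norm_nonneg (U.comp B1))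
            refine le_trans (ContinuousLinearMap.opNorm_le_bound _ (norm_nonneg (x' j))
              fun g => ?_) (hM j)
            rw [ContinuousLinearMap.apply_apply]
            calc ‖g (x' j)‖ ≤ ‖g‖ * ‖x' j‖ := g.le_opNorm _
              _ = ‖x' j‖ * ‖g‖ := mul_comm _ _
  have hFe : ∀ i, F_op (e i) = ((δ i : ℝ) : ℂ) • Φ (U (x i)) := by
    intro i
    show Φ (U (B1 (e i))) = _
    rw [hB1e i, map_smul, map_smul]
  have hFHS : IsHS F_op := by
    choose ψ hψe hψn using hψ
    have hps : ∀ j, HasSum (fun i => δ i ^ 2 * ‖(U (x i)) (x' j)‖ ^ 2) (‖ψ j‖ ^ 2) := by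
      intro j
      refine (parseval (ψ j)).congr_fun fun i => ?_
      rw [hψe j i, norm_mul, Complex.norm_real, Real.norm_eq_abs,
        abs_of_nonneg (hδ0 i), mul_pow]
    have hRsum : Summable (fun ji : ℕ × ℕ =>
        ‖α ji.1‖ ^ 2 * (δ ji.2 ^ 2 * ‖(U (x ji.2)) (x' ji.1)‖ ^ 2)) := by
      refine (summable_prod_of_nonneg (fun _ => by positivity)).2 ⟨fun j => ?_, ?_⟩
      · exact (((hps j).summable).mul_left (‖α j‖ ^ 2)).congr fun i => rfl
      · refine Summable.of_nonneg_of_le (fun j => tsum_nonneg fun i => by positivity)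
          (fun j => ?_) (ht_sum.mul_right ((M * ‖U.comp B1‖) ^ 2))
        show ∑' i, ‖α j‖ ^ 2 * (δ i ^ 2 * ‖(U (x i)) (x' j)‖ ^ 2)
          ≤ t j * (M * ‖U.comp B1‖) ^ 2
        rw [tsum_mul_left, (hps j).tsum_eq]
        exact mul_le_mul (hα_sq j) (pow_le_pow_left₀ (norm_nonneg _) (hψn j) 2)
          (by positivity) (ht_nonneg j)
    have hswap : Summable (fun ij : ℕ × ℕ =>
        ‖α ij.2‖ ^ 2 * (δ ij.1 ^ 2 * ‖(U (x ij.1)) (x' ij.2)‖ ^ 2)) :=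
      hRsum.prod_symm.congr fun ij => rfl
    have h2 := ((summable_prod_of_nonneg (fun _ => by positivity)).1 hswap).2
    show Summable fun i => ‖F_op (e i)‖ ^ 2
    refine h2.congr fun i => ?_
    have h3 : ‖F_op (e i)‖ ^ 2 = δ i ^ 2 * ‖Φ (U (x i))‖ ^ 2 := by
      rw [hFe i, norm_smul, Complex.norm_real, Real.norm_eq_abs,
        abs_of_nonneg (hδ0 i), mul_pow]
    have h4 : HasSum (fun j => ‖α j * (U (x i)) (x' j)‖ ^ 2) (‖Φ (U (x i))‖ ^ 2) := by
      refine (hasSum_normSq (Φ (U (x i)))).congr_fun fun j => ?_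
      rw [hΦc]
    calc ∑' j, ‖α j‖ ^ 2 * (δ i ^ 2 * ‖(U (x i)) (x' j)‖ ^ 2)
        = ∑' j, δ i ^ 2 * ‖α j * (U (x i)) (x' j)‖ ^ 2 := by
          refine tsum_congr fun j => ?_
          rw [norm_mul, mul_pow]
          ring
      _ = δ i ^ 2 * ∑' j, ‖α j * (U (x i)) (x' j)‖ ^ 2 := tsum_mul_left
      _ = δ i ^ 2 * ‖Φ (U (x i))‖ ^ 2 := by rw [h4.tsum_eq]
      _ = ‖F_op (e i)‖ ^ 2 := h3.symm
  have hGHS : IsHS Dγ := by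
    show Summable fun i => ‖Dγ (e i)‖ ^ 2
    refine ht_sum.congr fun i => ?_
    rw [hDe i, norm_smul, Complex.norm_real, Real.norm_eq_abs,
      abs_of_nonneg (hγ0 i), norm_e i, mul_one, hγsq i]
  -- the orthogonal projection onto ker W
  set K : Submodule ℂ APaux.H := LinearMap.ker (W : APaux.H →ₗ[ℂ] APaux.H) with hK_def
  haveI : CompleteSpace K := (ContinuousLinearMap.isClosed_ker W).completeSpace_coe
  set P : APaux.H →L[ℂ] APaux.H := K.subtypeL.comp (Submodule.orthogonalProjection K) with hP_def
  have hWP : ∀ v, W (P v) = 0 := by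
    intro v
    have h1 : (P v) ∈ K := (Submodule.orthogonalProjection K v).2
    rw [hK_def] at h1
    exact LinearMap.mem_ker.1 h1
  have hPW : ∀ v, P (W v) = W v := by
    intro v
    have hmem : W v ∈ K := by
      rw [hK_def]
      exact LinearMap.mem_ker.2 (hW2 v)
    show (↑(Submodule.orthogonalProjection K (W v)) : APaux.H) = W v
    rw [show W v = (↑(⟨W v, hmem⟩ : K) : APaux.H) from rfl,
      Submodule.orthogonalProjection_mem_subspace_eq_self]
  have htrWP : tr (W.comp P) = 0 := by
    have h1 : W.comp P = 0 := by
      refine ContinuousLinearMap.ext fun v => ?_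
      rw [ContinuousLinearMap.comp_apply, ContinuousLinearMap.zero_apply]
      exact hWP v
    rw [h1]
    show (∑' k, (((0 : APaux.H →L[ℂ] APaux.H)) (e k) : ℕ → ℂ) k) = 0
    simp [lp.coeFn_zero]
  have hchain : tr W = 0 := by
    have e1 : W = (P.comp F_op).comp Dγ :=
      ContinuousLinearMap.ext fun v => (hPW v).symm
    calc tr W = tr ((P.comp F_op).comp Dγ) := by rw [← e1]
      _ = tr (Dγ.comp (P.comp F_op)) := tr_comp_comm (isHS_comp_left P hFHS) hGHS
      _ = tr ((Dγ.comp P).comp F_op) := by congr 1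
      _ = tr (F_op.comp (Dγ.comp P)) := tr_comp_comm (isHS_comp_right hGHS P) hFHS
      _ = tr (W.comp P) := by congr 1
      _ = 0 := htrWP
  have hfinal : ∀ k, (W (e k) : ℕ → ℂ) k = lam k * (U (x k)) (x' k) := by
    intro k
    show (Φ (U (B1 (Dγ (e k)))) : ℕ → ℂ) k = _
    rw [hDe k, map_smul, hB1e k]
    simp only [map_smul]
    simp only [lp.coeFn_smul, Pi.smul_apply, smul_eq_mul]
    rw [hΦc, ← hαγδ k]
    ring
  calc ∑' k, lam k * (U (x k)) (x' k) = tr W := tsum_congr fun k => (hfinal k).symm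
    _ = 0 := hchain
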